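/- Theorem 2 (the comparison value reveals nothing): let ℓ, σ be natural numbers and N a natural number with N > 2^(σ+ℓ+3); let x, y be integers with |x| ≤ 2^ℓ and |y| ≤ 2^ℓ, let r₁ be an integer with 1 ≤ r₁ < 2^σ, and let r₂ be an integer with 0 < r₂, 2·r₂ ≤ N, and 2·(r₁ + r₂) > N. Define D₀ = (r₁·(x − y + 1) + r₂) mod N and D₁ = (r₁·(y − x) + r₂) mod N. Then exactly one of the events 2·D₀ > N and 2·D₁ > N holds; consequently, if π is chosen uniformly at random from {0,1}, the probability that 2·D_π > N equals 1/2, independently of x and y. -/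
import Mathlib


/-- Theorem 2 (the comparison value reveals nothing): exactly one of
`2·D₀ > N` and `2·D₁ > N` holds, hence for a uniformly random bit `π` the
probability that `2·D_π > N` equals `1/2`, independently of `x` and `y`. -/
theorem twoSMIN_reveals_nothing (ℓ σ N : ℕ) (hN : 2 ^ (σ + ℓ + 3) < N)
    (x y : ℤ) (hx : |x| ≤ 2 ^ ℓ) (hy : |y| ≤ 2 ^ ℓ)
    (r₁ : ℤ) (hr₁ : 1 ≤ r₁) (hr₁' : r₁ < 2 ^ σ)
    (r₂ : ℤ) (hr₂ : 0 < r₂) (hr₂' : 2 * r₂ ≤ (N : ℤ))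
    (hsum : (N : ℤ) < 2 * (r₁ + r₂))
    (D₀ D₁ : ℤ)
    (hD₀ : D₀ = (r₁ * (x - y + 1) + r₂) % (N : ℤ))
    (hD₁ : D₁ = (r₁ * (y - x) + r₂) % (N : ℤ)) :
    Xor' (2 * D₀ > (N : ℤ)) (2 * D₁ > (N : ℤ)) ∧
      ((if 2 * D₀ > (N : ℤ) then (1 : ℚ) else 0)
        + (if 2 * D₁ > (N : ℤ) then (1 : ℚ) else 0)) / 2 = 1 / 2 := by
  have hNZ : ((2:ℤ) ^ (σ + ℓ + 3)) < (N : ℤ) := by exact_mod_cast hN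
  have hpow : ((2:ℤ) ^ (σ + ℓ + 3)) = 2 ^ σ * 2 ^ ℓ * 8 := by ring
  have hx' := abs_le.mp hx
  have hy' := abs_le.mp hy
  have hσpos : (1:ℤ) ≤ 2 ^ σ := one_le_pow₀ one_le_two
  have hℓpos : (1:ℤ) ≤ 2 ^ ℓ := one_le_pow₀ one_le_two
  -- key size bounds on the noise terms
  have hb1 : |r₁ * (x - y + 1)| ≤ r₁ * (2 ^ ℓ + 2 ^ ℓ + 1) := by
    rw [abs_mul, abs_of_pos (by linarith : (0:ℤ) < r₁)]
    have : |x - y + 1| ≤ 2 ^ ℓ + 2 ^ ℓ + 1 := by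
      rw [abs_le]; constructor <;> linarith [hx'.1, hx'.2, hy'.1, hy'.2]
    nlinarith
  have hb2 : |r₁ * (y - x)| ≤ r₁ * (2 ^ ℓ + 2 ^ ℓ + 1) := by
    rw [abs_mul, abs_of_pos (by linarith : (0:ℤ) < r₁)]
    have : |y - x| ≤ 2 ^ ℓ + 2 ^ ℓ + 1 := by
      rw [abs_le]; constructor <;> linarith [hx'.1, hx'.2, hy'.1, hy'.2]
    nlinarith
  have hK : 2 * (r₁ * (2 ^ ℓ + 2 ^ ℓ + 1)) + 2 * r₁ < (N : ℤ) := by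
    nlinarith [hσpos, hℓpos]
  have hb1' := abs_le.mp hb1
  have hb2' := abs_le.mp hb2
  -- both raw values lie in [0, N), so the mods are identities
  have hD₀' : D₀ = r₁ * (x - y + 1) + r₂ := by
    rw [hD₀, Int.emod_eq_of_lt (by linarith) (by linarith)]
  have hD₁' : D₁ = r₁ * (y - x) + r₂ := by
    rw [hD₁, Int.emod_eq_of_lt (by linarith) (by linarith)]
  rcases le_or_gt y x with hxy | hxy
  · have h1 : r₁ ≤ r₁ * (x - y + 1) := by
      have := mul_le_mul_of_nonneg_left (by linarith : (1:ℤ) ≤ x - y + 1) (by linarith : (0:ℤ) ≤ r₁)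
      linarith
    have h2 : r₁ * (y - x) ≤ 0 :=
      mul_nonpos_of_nonneg_of_nonpos (by linarith) (by linarith)
    have hA : 2 * D₀ > (N : ℤ) := by rw [hD₀']; linarith
    have hB : ¬ (2 * D₁ > (N : ℤ)) := by rw [hD₁']; push_neg; linarith
    refine ⟨Or.inl ⟨hA, hB⟩, ?_⟩
    simp [hA, hB]
  · have h1 : r₁ * (x - y + 1) ≤ 0 :=
      mul_nonpos_of_nonneg_of_nonpos (by linarith) (by linarith)
    have h2 : r₁ ≤ r₁ * (y - x) := by
      have := mul_le_mul_of_nonneg_left (by linarith : (1:ℤ) ≤ y - x) (by linarith : (0:ℤ) ≤ r₁)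
      linarith
    have hB : 2 * D₁ > (N : ℤ) := by rw [hD₁']; linarith
    have hA : ¬ (2 * D₀ > (N : ℤ)) := by rw [hD₀']; push_neg; linarith
    refine ⟨Or.inr ⟨hB, hA⟩, ?_⟩
    simp [hA, hB]
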